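/- Assume A has full row rank. Suppose gph S = ⋃_{l=1}^L C_l for closed convex sets C_l. Then L ≥ |ℱ|, the number of nonempty faces of Y⁰; and if L = |ℱ| then {C_1,…,C_L} = {S_F : F ∈ ℱ}. In other words, the decomposition of gph S into the polyhedral cones S_F is the optimal and unique minimal decomposition into closed convex sets. -/

import Mathlib

open Set

noncomputable section

variable {m n : ℕ}

/-- Euclidean distance between two vectors. -/
def en {k : ℕ} (x x' : Fin k → ℝ) : ℝ := Real.sqrt (∑ i, (x i - x' i) ^ 2)

/-- The ℓ₁ norm. -/
def l1 {k : ℕ} (x : Fin k → ℝ) : ℝ := ∑ i, |x i|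

/-- Squared Euclidean norm. -/
def sqnorm {k : ℕ} (y : Fin k → ℝ) : ℝ := ∑ i, (y i) ^ 2

/-- `A_iᵀ y`, the dot product of the `i`-th column of `A` with `y`. -/
def colDot (A : Matrix (Fin m) (Fin n) ℝ) (i : Fin n) (y : Fin m → ℝ) : ℝ := ∑ k, A k i * y k

/-- The dual feasible set `Y⁰ = {y : ‖Aᵀy‖_∞ ≤ 1}`. -/
def Ydual (A : Matrix (Fin m) (Fin n) ℝ) : Set (Fin m → ℝ) := {y | ∀ i, |colDot A i y| ≤ 1}

/-- `F` is a face of `C`: the argmax set of a linear functional over `C`. -/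
def IsFaceOf (C F : Set (Fin m → ℝ)) : Prop :=
  ∃ v : Fin m → ℝ, F = {y | y ∈ C ∧ ∀ z ∈ C, ∑ k, v k * z k ≤ ∑ k, v k * y k}

/-- `𝒜⁺(F)`. -/
def Aplus (A : Matrix (Fin m) (Fin n) ℝ) (F : Set (Fin m → ℝ)) : Set (Fin n) :=
  {i | ∀ y ∈ F, colDot A i y = 1}

/-- `𝒜⁻(F)`. -/
def Aminus (A : Matrix (Fin m) (Fin n) ℝ) (F : Set (Fin m → ℝ)) : Set (Fin n) :=
  {i | ∀ y ∈ F, colDot A i y = -1}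

/-- `𝒜⁰(F)`. -/
def Azero (A : Matrix (Fin m) (Fin n) ℝ) (F : Set (Fin m → ℝ)) : Set (Fin n) :=
  {i | ∃ y ∈ F, -1 < colDot A i y ∧ colDot A i y < 1}

/-- Solution set of the extended ℓ₁ regularization problem:
basis pursuit when `lam = 0`, Lasso-type problem when `lam > 0`. -/
def Sol (A : Matrix (Fin m) (Fin n) ℝ) (lam : ℝ) (b : Fin m → ℝ) : Set (Fin n → ℝ) :=
  if lam = 0 then
    {x | A.mulVec x = b ∧ ∀ z, A.mulVec z = b → l1 x ≤ l1 z}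
  else
    {x | ∀ z, l1 x + 1 / (2 * lam) * sqnorm (A.mulVec x - b) ≤
          l1 z + 1 / (2 * lam) * sqnorm (A.mulVec z - b)}

/-- Graph of the solution multifunction `S`. -/
def gphS (A : Matrix (Fin m) (Fin n) ℝ) : Set (ℝ × (Fin m → ℝ) × (Fin n → ℝ)) :=
  {p | 0 ≤ p.1 ∧ p.2.2 ∈ Sol A p.1 p.2.1}

/-- `A_iᵀ(b − Ax)`. -/
def resid (A : Matrix (Fin m) (Fin n) ℝ) (b : Fin m → ℝ) (x : Fin n → ℝ) (i : Fin n) : ℝ :=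
  colDot A i (b - A.mulVec x)

/-- The polyhedral cone `S_F` associated with a face `F` of `Y⁰`. -/
def SFace (A : Matrix (Fin m) (Fin n) ℝ) (F : Set (Fin m → ℝ)) :
    Set (ℝ × (Fin m → ℝ) × (Fin n → ℝ)) :=
  {p | 0 ≤ p.1 ∧
    (∀ i ∈ Aplus A F, 0 ≤ p.2.2 i ∧ resid A p.2.1 p.2.2 i = p.1) ∧
    (∀ i ∈ Azero A F, p.2.2 i = 0 ∧ |resid A p.2.1 p.2.2 i| ≤ p.1) ∧
    (∀ i ∈ Aminus A F, p.2.2 i ≤ 0 ∧ resid A p.2.1 p.2.2 i = -p.1)}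

/-- `cl W(I⁺, I⁰, I⁻)`. -/
def clW (Ip I0 Im : Set (Fin n)) : Set (Fin n → ℝ) :=
  {x | (∀ i ∈ Ip, 0 ≤ x i) ∧ (∀ i ∈ I0, x i = 0) ∧ (∀ i ∈ Im, x i ≤ 0)}

/-- `W(I⁺, I⁰, I⁻)`. -/
def Wset (Ip I0 Im : Set (Fin n)) : Set (Fin n → ℝ) :=
  {x | (∀ i ∈ Ip, 0 < x i) ∧ (∀ i ∈ I0, x i = 0) ∧ (∀ i ∈ Im, x i < 0)}

/-- The projection `D_F` of `S_F` onto the `(λ, b)` coordinates. -/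
def DFace (A : Matrix (Fin m) (Fin n) ℝ) (F : Set (Fin m → ℝ)) : Set (ℝ × (Fin m → ℝ)) :=
  (fun p => (p.1, p.2.1)) '' SFace A F

/-- The convex subdifferential of the ℓ₁ norm. -/
def l1subdiff {k : ℕ} (x : Fin k → ℝ) : Set (Fin k → ℝ) :=
  {v | ∀ z, l1 x + ∑ i, v i * (z i - x i) ≤ l1 z}

/-- Polyhedral subset of `ℝ × ℝ^m × ℝ^n`: a finite intersection of closed half-spaces. -/
def IsPolyhedral3 (s : Set (ℝ × (Fin m → ℝ) × (Fin n → ℝ))) : Prop :=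
  ∃ (k : ℕ) (a : Fin k → ℝ × (Fin m → ℝ) × (Fin n → ℝ)) (β : Fin k → ℝ),
    s = {p | ∀ j, (a j).1 * p.1 + (∑ t, (a j).2.1 t * p.2.1 t) +
          (∑ t, (a j).2.2 t * p.2.2 t) ≤ β j}

/-- Lipschitz continuity of a set-valued map on a set `X`, with constant `κ`. -/
def LipOn {a b : ℕ} (G : (Fin a → ℝ) → Set (Fin b → ℝ)) (X : Set (Fin a → ℝ)) (κ : ℝ) : Prop :=
  (∀ x ∈ X, (G x).Nonempty ∧ IsClosed (G x)) ∧
  ∀ x ∈ X, ∀ x' ∈ X, ∀ y' ∈ G x', ∃ y ∈ G x, en y' y ≤ κ * en x' x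

end

section Proof1
open Classical Finset
variable {m n : ℕ} {A : Matrix (Fin m) (Fin n) ℝ} {F : Set (Fin m → ℝ)}

lemma colDot_add (A : Matrix (Fin m) (Fin n) ℝ) (i : Fin n) (y z : Fin m → ℝ) :
    colDot A i (y + z) = colDot A i y + colDot A i z := by
  simp [colDot, mul_add, Finset.sum_add_distrib]

lemma colDot_smul (A : Matrix (Fin m) (Fin n) ℝ) (i : Fin n) (c : ℝ) (y : Fin m → ℝ) :
    colDot A i (c • y) = c * colDot A i y := by
  unfold colDot
  rw [Finset.mul_sum]
  exact Finset.sum_congr rfl fun k _ => by simp; ring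

lemma colDot_combo (A : Matrix (Fin m) (Fin n) ℝ) (i : Fin n) (a b : ℝ) (y z : Fin m → ℝ) :
    colDot A i (a • y + b • z) = a * colDot A i y + b * colDot A i z := by
  rw [colDot_add, colDot_smul, colDot_smul]

lemma ydual_convex : Convex ℝ (Ydual A) := by
  intro y hy z hz a b ha hb hab
  intro i
  rw [colDot_combo]
  calc |a * colDot A i y + b * colDot A i z| ≤ a * |colDot A i y| + b * |colDot A i z| := by
        refine (abs_add_le _ _).trans ?_
        rw [abs_mul, abs_mul, abs_of_nonneg ha, abs_of_nonneg hb]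
    _ ≤ a * 1 + b * 1 := by gcongr; exacts [hy i, hz i]
    _ = 1 := by linarith

lemma IsFaceOf.subset (h : IsFaceOf (Ydual A) F) : F ⊆ Ydual A := by
  obtain ⟨v, rfl⟩ := h; intro y hy; exact hy.1

lemma dot_combo (v : Fin m → ℝ) (a b : ℝ) (y z : Fin m → ℝ) :
    ∑ k, v k * (a • y + b • z) k = a * ∑ k, v k * y k + b * ∑ k, v k * z k := by
  rw [Finset.mul_sum, Finset.mul_sum, ← Finset.sum_add_distrib]
  exact Finset.sum_congr rfl fun k _ => by simp; ring

lemma IsFaceOf.convex (h : IsFaceOf (Ydual A) F) : Convex ℝ F := by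
  obtain ⟨v, rfl⟩ := h
  intro y hy z hz a b ha hb hab
  refine ⟨ydual_convex hy.1 hz.1 ha hb hab, fun w hw => ?_⟩
  have h1 := hy.2 w hw
  have h2 := hz.2 w hw
  rw [dot_combo]
  calc ∑ k, v k * w k = a * ∑ k, v k * w k + b * ∑ k, v k * w k := by
        rw [← add_mul, hab, one_mul]
    _ ≤ a * ∑ k, v k * y k + b * ∑ k, v k * z k := by
        gcongr <;> assumption

/-- every index is in one of the three sign classes -/
lemma tri_mem (hF : IsFaceOf (Ydual A) F) (hne : F.Nonempty) (i : Fin n) :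
    i ∈ Aplus A F ∨ i ∈ Azero A F ∨ i ∈ Aminus A F := by
  by_cases hp : i ∈ Aplus A F
  · exact Or.inl hp
  by_cases hm : i ∈ Aminus A F
  · exact Or.inr (Or.inr hm)
  refine Or.inr (Or.inl ?_)
  simp only [Aplus, Set.mem_setOf_eq, not_forall] at hp hm
  obtain ⟨y1, hy1F, hy1⟩ := hp
  have hsub := hF.subset
  have hy1b := hsub hy1F i
  rcases lt_or_eq_of_le (neg_le_of_abs_le hy1b) with h1 | h1
  · -- -1 < colDot i y1; and colDot i y1 < 1 since ≠ 1 and ≤ 1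
    exact ⟨y1, hy1F, h1, lt_of_le_of_ne (le_of_abs_le hy1b) hy1⟩
  · -- colDot i y1 = -1
    simp only [Aminus, Set.mem_setOf_eq, not_forall] at hm
    obtain ⟨y2, hy2F, hy2⟩ := hm
    have hy2b := hsub hy2F i
    rcases lt_or_eq_of_le (le_of_abs_le hy2b) with h2 | h2
    · rcases lt_or_eq_of_le (neg_le_of_abs_le hy2b) with h3 | h3
      · exact ⟨y2, hy2F, h3, h2⟩
      · -- y2 has value -1? no: h3 : -1 = colDot i y2 contradicts hy2 : ¬ (= -1)
        exact absurd h3.symm hy2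
    · -- colDot i y2 = 1, colDot i y1 = -1: take midpoint
      have hmid : (1/2 : ℝ) • y1 + (1/2 : ℝ) • y2 ∈ F :=
        hF.convex hy1F hy2F (by norm_num) (by norm_num) (by norm_num)
      refine ⟨_, hmid, ?_, ?_⟩ <;> rw [colDot_combo] <;> linarith

lemma aplus_azero_disj (hi : i ∈ Aplus A F) (hi0 : i ∈ Azero A F) : False := by
  obtain ⟨y, hyF, _, h2⟩ := hi0
  exact absurd (hi y hyF) (ne_of_lt h2)

lemma aminus_azero_disj (hi : i ∈ Aminus A F) (hi0 : i ∈ Azero A F) : False := by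
  obtain ⟨y, hyF, h1, _⟩ := hi0
  exact absurd (hi y hyF) (ne_of_gt h1)

lemma aplus_aminus_disj (hne : F.Nonempty) (hi : i ∈ Aplus A F) (hi2 : i ∈ Aminus A F) : False := by
  obtain ⟨y, hy⟩ := hne
  have := hi y hy
  have := hi2 y hy
  linarith

end Proof1

section Proof2
open Classical Finset
variable {m n : ℕ} {A : Matrix (Fin m) (Fin n) ℝ} {F : Set (Fin m → ℝ)}

lemma colDot_sum (A : Matrix (Fin m) (Fin n) ℝ) (i : Fin n) {ι : Type*} (s : Finset ι)
    (f : ι → (Fin m → ℝ)) : colDot A i (∑ j ∈ s, f j) = ∑ j ∈ s, colDot A i (f j) := by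
  unfold colDot
  rw [Finset.sum_comm]
  exact Finset.sum_congr rfl fun k _ => by simp [Finset.sum_apply, Finset.mul_sum]

/-- there is a point of F where all the `Azero` constraints are strictly inactive -/
lemma exists_yhat (hF : IsFaceOf (Ydual A) F) (hne : F.Nonempty) :
    ∃ yh ∈ F, ∀ i ∈ Azero A F, |colDot A i yh| < 1 := by
  obtain ⟨y0, hy0⟩ := hne
  -- witness function
  have hw : ∀ i : Fin n, ∃ y ∈ F, i ∈ Azero A F → (-1 < colDot A i y ∧ colDot A i y < 1) := by
    intro i
    by_cases hi : i ∈ Azero A F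
    · obtain ⟨y, hyF, h⟩ := hi
      exact ⟨y, hyF, fun _ => h⟩
    · exact ⟨y0, hy0, fun h => absurd h hi⟩
  choose w hwF hwS using hw
  set N : ℝ := (n + 1 : ℝ) with hN
  have hNpos : 0 < N := by positivity
  set yh : Fin m → ℝ := (N⁻¹ • y0) + ∑ j : Fin n, N⁻¹ • w j with hyh
  have hyhF : yh ∈ F := by
    have := hF.convex
    have hmem : ∀ j : Fin n, w j ∈ F := hwF
    -- use Convex.sum_mem over Fin (n+1) with Fin.cons
    have : yh = ∑ j : Fin (n + 1), (fun _ => N⁻¹) j • (Fin.cons y0 w : Fin (n+1) → Fin m → ℝ) j := by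
      rw [Fin.sum_univ_succ]
      simp [hyh]
    rw [this]
    refine hF.convex.sum_mem (fun _ _ => by positivity) ?_ ?_
    · simp [hN]
      rw [mul_inv_cancel₀ (by positivity)]
    · intro j _
      refine Fin.cases ?_ ?_ j
      · simpa using hy0
      · intro k; simpa using hwF k
  refine ⟨yh, hyhF, fun i hi => ?_⟩
  have hcol : colDot A i yh = N⁻¹ * colDot A i y0 + ∑ j : Fin n, N⁻¹ * colDot A i (w j) := by
    rw [hyh, colDot_add, colDot_smul, colDot_sum]
    congr 1
    exact Finset.sum_congr rfl fun j _ => colDot_smul A i _ _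
  have hsub := hF.subset
  have hb0 := hsub hy0 i
  have hbw : ∀ j, |colDot A i (w j)| ≤ 1 := fun j => hsub (hwF j) i
  have hstrict := hwS i hi
  rw [abs_lt]
  constructor
  · rw [hcol]
    have h1 : ∀ j ∈ (Finset.univ : Finset (Fin n)), -(N⁻¹ * 1) ≤ N⁻¹ * colDot A i (w j) := by
      intro j _
      have := neg_le_of_abs_le (hbw j)
      have : -(1:ℝ) ≤ colDot A i (w j) := this
      nlinarith [inv_pos.mpr hNpos]
    have h2 : -(N⁻¹ * 1) < N⁻¹ * colDot A i (w i) := by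
      have := hstrict.1
      nlinarith [inv_pos.mpr hNpos]
    have hsum : ∑ j : Fin n, -(N⁻¹ * 1) < ∑ j : Fin n, N⁻¹ * colDot A i (w j) :=
      Finset.sum_lt_sum h1 ⟨i, Finset.mem_univ i, h2⟩
    have hy0b : -(N⁻¹ * 1) ≤ N⁻¹ * colDot A i y0 := by
      have := neg_le_of_abs_le hb0
      nlinarith [inv_pos.mpr hNpos]
    have hcount : (Finset.univ : Finset (Fin n)).card = n := by simp
    have : ∑ j : Fin n, -(N⁻¹ * 1) = -(n * N⁻¹) := by
      rw [Finset.sum_const, hcount]; simp [mul_comm]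
    have hNid : N⁻¹ * 1 + n * N⁻¹ = 1 := by
      field_simp [hN]; ring
    linarith
  · rw [hcol]
    have h1 : ∀ j ∈ (Finset.univ : Finset (Fin n)), N⁻¹ * colDot A i (w j) ≤ N⁻¹ * 1 := by
      intro j _
      have := le_of_abs_le (hbw j)
      nlinarith [inv_pos.mpr hNpos]
    have h2 : N⁻¹ * colDot A i (w i) < N⁻¹ * 1 := by
      have := hstrict.2
      nlinarith [inv_pos.mpr hNpos]
    have hsum : ∑ j : Fin n, N⁻¹ * colDot A i (w j) < ∑ j : Fin n, N⁻¹ * 1 :=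
      Finset.sum_lt_sum h1 ⟨i, Finset.mem_univ i, h2⟩
    have hy0b : N⁻¹ * colDot A i y0 ≤ N⁻¹ * 1 := by
      have := le_of_abs_le hb0
      nlinarith [inv_pos.mpr hNpos]
    have hcount : (Finset.univ : Finset (Fin n)).card = n := by simp
    have : ∑ j : Fin n, N⁻¹ * (1:ℝ) = n * N⁻¹ := by
      rw [Finset.sum_const, hcount]; simp [mul_comm]
    have hNid : N⁻¹ * 1 + n * N⁻¹ = 1 := by
      field_simp [hN]; ring
    linarith

end Proof2

section Proof3
open Classical Finset
variable {m n : ℕ} {A : Matrix (Fin m) (Fin n) ℝ}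

lemma le_of_eps {a b : ℝ} (h : ∀ ε : ℝ, 0 < ε → a ≤ b + ε) : a ≤ b := by
  by_contra hc
  push_neg at hc
  have := h ((a - b)/2) (by linarith)
  linarith

lemma sqnorm_nonneg (u : Fin m → ℝ) : 0 ≤ sqnorm u :=
  Finset.sum_nonneg fun k _ => sq_nonneg _

lemma sqnorm_expand (u v : Fin m → ℝ) :
    sqnorm (u + v) = sqnorm u + 2 * (∑ k, u k * v k) + sqnorm v := by
  unfold sqnorm
  rw [Finset.mul_sum, ← Finset.sum_add_distrib, ← Finset.sum_add_distrib]
  exact Finset.sum_congr rfl fun k _ => by simp [Pi.add_apply]; ring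

lemma dot_mulVec (A : Matrix (Fin m) (Fin n) ℝ) (y : Fin m → ℝ) (w : Fin n → ℝ) :
    ∑ k, y k * A.mulVec w k = ∑ i, colDot A i y * w i := by
  calc ∑ k, y k * A.mulVec w k = ∑ k, ∑ j, y k * (A k j * w j) := by
        refine Finset.sum_congr rfl fun k _ => ?_
        simp [Matrix.mulVec, dotProduct, Finset.mul_sum]
    _ = ∑ j, ∑ k, y k * (A k j * w j) := Finset.sum_comm
    _ = ∑ j, colDot A j y * w j := by
        refine Finset.sum_congr rfl fun j _ => ?_
        rw [colDot, Finset.sum_mul]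
        exact Finset.sum_congr rfl fun k _ => by ring

lemma colDot_sub (A : Matrix (Fin m) (Fin n) ℝ) (i : Fin n) (y z : Fin m → ℝ) :
    colDot A i (y - z) = colDot A i y - colDot A i z := by
  simp [colDot, mul_sub, Finset.sum_sub_distrib]

lemma resid_eq_neg (b : Fin m → ℝ) (x : Fin n → ℝ) (i : Fin n) :
    resid A b x i = -colDot A i (A.mulVec x - b) := by
  rw [resid, colDot_sub, colDot_sub]; ring

/-- KKT sufficiency for `lam > 0`. -/
lemma kkt_suff {lam : ℝ} (hl : 0 < lam) {b : Fin m → ℝ} {x : Fin n → ℝ}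
    (habs : ∀ i, |resid A b x i| ≤ lam)
    (hsgn : ∀ i, resid A b x i * x i = lam * |x i|) :
    x ∈ Sol A lam b := by
  rw [Sol, if_neg hl.ne']
  intro z
  set r : Fin n → ℝ := resid A b x with hr
  set R : ℝ := ∑ i, r i * (z i - x i) with hR
  have hAz : A.mulVec z - b = (A.mulVec x - b) + A.mulVec (z - x) := by
    rw [Matrix.mulVec_sub]; abel
  have hdot : ∑ k, (A.mulVec x - b) k * (A.mulVec (z - x)) k = -R := by
    rw [dot_mulVec, hR, ← Finset.sum_neg_distrib]
    refine Finset.sum_congr rfl fun i _ => ?_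
    have h2 : colDot A i (A.mulVec x - b) = -r i := by rw [hr, resid_eq_neg]; ring
    rw [h2, Pi.sub_apply]; ring
  have hid : sqnorm (A.mulVec z - b)
      = sqnorm (A.mulVec x - b) + 2 * (-R) + sqnorm (A.mulVec (z - x)) := by
    rw [hAz, sqnorm_expand, hdot]
  have hsum : lam * l1 x + R ≤ lam * l1 z := by
    have hterm : ∀ i ∈ (Finset.univ : Finset (Fin n)),
        lam * |x i| + r i * (z i - x i) ≤ lam * |z i| := by
      intro i _
      have h1 : r i * z i ≤ lam * |z i| := by
        calc r i * z i ≤ |r i * z i| := le_abs_self _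
          _ = |r i| * |z i| := abs_mul _ _
          _ ≤ lam * |z i| := mul_le_mul_of_nonneg_right (habs i) (abs_nonneg _)
      have h2 := hsgn i
      nlinarith
    have h3 := Finset.sum_le_sum hterm
    rw [Finset.sum_add_distrib, ← Finset.mul_sum, ← Finset.mul_sum] at h3
    exact h3
  have hA2 := sqnorm_nonneg (A.mulVec (z - x))
  have hfact : l1 z + 1 / (2 * lam) * sqnorm (A.mulVec z - b)
      - (l1 x + 1 / (2 * lam) * sqnorm (A.mulVec x - b))
      = 1 / (2 * lam) * ((2 * lam * (l1 z - l1 x)) - 2 * R + sqnorm (A.mulVec (z - x))) := by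
    rw [hid]; field_simp; ring
  have hpos : 0 ≤ 1 / (2 * lam) * ((2 * lam * (l1 z - l1 x)) - 2 * R + sqnorm (A.mulVec (z - x))) := by
    apply mul_nonneg (by positivity)
    linarith
  linarith

/-- master inequality for necessity -/
lemma kkt_master {lam : ℝ} (hl : 0 < lam) {b : Fin m → ℝ} {x : Fin n → ℝ}
    (hx : x ∈ Sol A lam b) (i : Fin n) (s : ℝ) :
    0 ≤ 2 * lam * (|x i + s| - |x i|) - 2 * s * resid A b x i + s ^ 2 * (∑ k, (A k i) ^ 2) := by
  rw [Sol, if_neg hl.ne'] at hx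
  set z : Fin n → ℝ := x + s • (Pi.single i (1:ℝ) : Fin n → ℝ) with hz
  have hxz := hx z
  set q : ℝ := ∑ k, (A k i) ^ 2 with hq
  set r : ℝ := resid A b x i with hr
  -- l1 z
  have habsz : (fun j => |z j|) = Function.update (fun j => |x j|) i |x i + s| := by
    funext j
    by_cases hj : j = i
    · subst hj; simp [hz, Pi.single]
    · simp [hz, Function.update, hj, Pi.single_eq_of_ne hj]
  have hl1 : l1 z = l1 x - |x i| + |x i + s| := by
    unfold l1
    calc ∑ j, |z j| = ∑ j, Function.update (fun j => |x j|) i |x i + s| j := by rw [habsz]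
      _ = |x i + s| + ∑ j ∈ Finset.univ \ {i}, |x j| :=
          Finset.sum_update_of_mem (Finset.mem_univ i) _ _
      _ = |x i + s| + ∑ j ∈ Finset.univ.erase i, |x j| := by rw [Finset.erase_eq]
      _ = l1 x - |x i| + |x i + s| := by
          have := Finset.add_sum_erase Finset.univ (fun j => |x j|) (Finset.mem_univ i)
          unfold l1; linarith
  -- A z
  have hAz : A.mulVec z - b = (A.mulVec x - b) + s • (fun k => A k i) := by
    rw [hz, Matrix.mulVec_add, Matrix.mulVec_smul, Matrix.mulVec_single]
    funext k; simp; ring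
  have hdots : ∑ k, (A.mulVec x - b) k * (s • (fun k => A k i) : Fin m → ℝ) k = s * (-r) := by
    have hrr : -r = ∑ k, A k i * (A.mulVec x - b) k := by
      rw [hr, resid_eq_neg, neg_neg]; rfl
    rw [hrr, Finset.mul_sum]
    exact Finset.sum_congr rfl fun k _ => by simp; ring
  have hsq : sqnorm (s • (fun k => A k i) : Fin m → ℝ) = s ^ 2 * q := by
    unfold sqnorm
    rw [hq, Finset.mul_sum]
    exact Finset.sum_congr rfl fun k _ => by simp; ring
  have hid : sqnorm (A.mulVec z - b) = sqnorm (A.mulVec x - b) + 2 * (s * (-r)) + s ^ 2 * q := by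
    rw [hAz, sqnorm_expand, hdots, hsq]
  rw [hl1, hid] at hxz
  have h2l : 2 * lam * (1 / (2 * lam)) = 1 := by field_simp
  have key : 0 ≤ (|x i + s| - |x i|) + (1 / (2 * lam)) * (-2 * s * r + s ^ 2 * q) := by
    have expand : l1 x - |x i| + |x i + s| + 1 / (2 * lam) *
        (sqnorm (A.mulVec x - b) + 2 * (s * -r) + s ^ 2 * q)
        = (l1 x + 1 / (2 * lam) * sqnorm (A.mulVec x - b))
          + ((|x i + s| - |x i|) + (1 / (2 * lam)) * (-2 * s * r + s ^ 2 * q)) := by ring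
    rw [expand] at hxz
    linarith
  have h3 : 0 ≤ 2 * lam * ((|x i + s| - |x i|) + (1 / (2 * lam)) * (-2 * s * r + s ^ 2 * q)) :=
    mul_nonneg (by positivity) key
  have h4 : 2 * lam * ((|x i + s| - |x i|) + (1 / (2 * lam)) * (-2 * s * r + s ^ 2 * q))
      = 2 * lam * (|x i + s| - |x i|) - 2 * s * r + s ^ 2 * q := by
    field_simp; ring
  rw [h4] at h3
  exact h3

end Proof3

section Proof4
open Classical Finset
variable {m n : ℕ} {A : Matrix (Fin m) (Fin n) ℝ}

lemma exists_small {q c d : ℝ} (hq : 0 ≤ q) (hc : 0 < c) (hd : 0 < d) :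
    ∃ s : ℝ, 0 < s ∧ s ≤ c ∧ s * q < 2 * d := by
  refine ⟨min c (d / (q + 1)), lt_min hc (by positivity), min_le_left _ _, ?_⟩
  have h1 : min c (d / (q + 1)) ≤ d / (q + 1) := min_le_right _ _
  have h2 : (0:ℝ) < q + 1 := by linarith
  have h3 : d / (q + 1) * q < 2 * d := by
    rw [div_mul_eq_mul_div, div_lt_iff₀ h2]
    nlinarith
  nlinarith [mul_le_mul_of_nonneg_right h1 hq]

/-- KKT necessity for `lam > 0`. -/
lemma kkt_nec {lam : ℝ} (hl : 0 < lam) {b : Fin m → ℝ} {x : Fin n → ℝ}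
    (hx : x ∈ Sol A lam b) (i : Fin n) :
    |resid A b x i| ≤ lam ∧ (0 < x i → resid A b x i = lam) ∧
      (x i < 0 → resid A b x i = -lam) := by
  set q : ℝ := ∑ k, (A k i) ^ 2 with hqd
  have hq0 : 0 ≤ q := Finset.sum_nonneg fun k _ => sq_nonneg _
  set r : ℝ := resid A b x i with hrd
  have M : ∀ s : ℝ, 0 ≤ 2 * lam * (|x i + s| - |x i|) - 2 * s * r + s ^ 2 * q :=
    fun s => kkt_master hl hx i s
  have hupper : r ≤ lam := by
    by_contra hcon
    push_neg at hcon
    obtain ⟨s, hs, _, hsq⟩ := exists_small hq0 one_pos (show (0:ℝ) < r - lam by linarith)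
    have habs : |x i + s| - |x i| ≤ s := by
      have h := abs_add_le (x i) s
      rw [abs_of_pos hs] at h
      linarith [le_abs_self (x i), abs_nonneg (x i), h, neg_abs_le (x i)]
    nlinarith [M s, mul_le_mul_of_nonneg_left habs (by positivity : (0:ℝ) ≤ 2 * lam),
      mul_lt_mul_of_pos_left hsq hs, sq_nonneg s]
  have hlower : -lam ≤ r := by
    by_contra hcon
    push_neg at hcon
    obtain ⟨s, hs, _, hsq⟩ := exists_small hq0 one_pos (show (0:ℝ) < -r - lam by linarith)
    have habs : |x i + -s| - |x i| ≤ s := by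
      have h := abs_add_le (x i) (-s)
      rw [abs_neg, abs_of_pos hs] at h
      linarith
    nlinarith [M (-s), mul_le_mul_of_nonneg_left habs (by positivity : (0:ℝ) ≤ 2 * lam),
      mul_lt_mul_of_pos_left hsq hs]
  refine ⟨abs_le.mpr ⟨hlower, hupper⟩, ?_, ?_⟩
  · intro hxi
    by_contra hcon
    have hlt : r < lam := lt_of_le_of_ne hupper hcon
    obtain ⟨s, hs, hsc, hsq⟩ := exists_small hq0 hxi (show (0:ℝ) < lam - r by linarith)
    have habs : |x i + -s| - |x i| = -s := by
      rw [abs_of_nonneg (by linarith : 0 ≤ x i + -s), abs_of_pos hxi]; ring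
    have MM := M (-s)
    rw [habs] at MM
    nlinarith [mul_lt_mul_of_pos_left hsq hs]
  · intro hxi
    by_contra hcon
    have hgt : -lam < r := lt_of_le_of_ne hlower (fun h => hcon h.symm)
    obtain ⟨s, hs, hsc, hsq⟩ := exists_small hq0 (show (0:ℝ) < -x i by linarith)
      (show (0:ℝ) < lam + r by linarith)
    have habs : |x i + s| - |x i| = -s := by
      rw [abs_of_nonpos (by linarith : x i + s ≤ 0), abs_of_neg hxi]; ring
    have MM := M s
    rw [habs] at MM
    nlinarith [mul_lt_mul_of_pos_left hsq hs]

end Proof4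

section Proof5
open Classical Finset Matrix
variable {m n : ℕ} {A : Matrix (Fin m) (Fin n) ℝ} {F : Set (Fin m → ℝ)}

lemma colDot_transpose_inj (hrank : A.rank = m) {u : Fin m → ℝ}
    (h : ∀ i, colDot A i u = 0) : u = 0 := by
  have h1 : Aᵀ.mulVecLin u = 0 := by
    funext i
    simp only [Matrix.mulVecLin_apply, Matrix.mulVec_transpose, Matrix.vecMul,
      dotProduct, Pi.zero_apply]
    rw [← h i, colDot]
    exact Finset.sum_congr rfl fun k _ => mul_comm _ _
  have h2 : Aᵀ.rank = m := by rw [Matrix.rank_transpose]; exact hrank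
  have h3 := LinearMap.finrank_range_add_finrank_ker (Aᵀ.mulVecLin)
  rw [Module.finrank_fin_fun] at h3
  have h4 : Module.finrank ℝ (LinearMap.ker Aᵀ.mulVecLin) = 0 := by
    have hra : Matrix.rank Aᵀ = Module.finrank ℝ (LinearMap.range Aᵀ.mulVecLin) := rfl
    rw [hra] at h2
    omega
  have h5 : LinearMap.ker Aᵀ.mulVecLin = ⊥ := Submodule.finrank_eq_zero.mp h4
  have h6 : u ∈ LinearMap.ker Aᵀ.mulVecLin := h1
  rw [h5] at h6
  exact h6

lemma resid_combo (a c : ℝ) (b1 b2 : Fin m → ℝ) (x1 x2 : Fin n → ℝ) (i : Fin n) :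
    resid A (a • b1 + c • b2) (a • x1 + c • x2) i
      = a * resid A b1 x1 i + c * resid A b2 x2 i := by
  rw [resid, resid, resid, ← colDot_combo]
  congr 1
  rw [Matrix.mulVec_add, Matrix.mulVec_smul, Matrix.mulVec_smul]
  funext k
  simp
  ring

lemma sface_convex : Convex ℝ (SFace A F) := by
  rintro ⟨l1', b1, x1⟩ ⟨h01, hp1, h001, hm1⟩ ⟨l2, b2, x2⟩ ⟨h02, hp2, h002, hm2⟩ a c ha hc hac
  have hsm : (a • (l1', b1, x1) + c • (l2, b2, x2) : ℝ × (Fin m → ℝ) × (Fin n → ℝ))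
      = (a * l1' + c * l2, a • b1 + c • b2, a • x1 + c • x2) := by
    simp [Prod.ext_iff]
  rw [hsm]
  simp only [SFace, Set.mem_setOf_eq] at *
  refine ⟨by nlinarith, ?_, ?_, ?_⟩
  · intro i hi
    obtain ⟨hx1, hr1⟩ := hp1 i hi
    obtain ⟨hx2, hr2⟩ := hp2 i hi
    constructor
    · have : (a • x1 + c • x2) i = a * x1 i + c * x2 i := by simp
      rw [this]; nlinarith
    · rw [resid_combo, hr1, hr2]
  · intro i hi
    obtain ⟨hx1, hr1⟩ := h001 i hi
    obtain ⟨hx2, hr2⟩ := h002 i hi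
    constructor
    · have : (a • x1 + c • x2) i = a * x1 i + c * x2 i := by simp
      rw [this, hx1, hx2]; ring
    · rw [resid_combo]
      calc |a * resid A b1 x1 i + c * resid A b2 x2 i|
          ≤ a * |resid A b1 x1 i| + c * |resid A b2 x2 i| := by
            refine (abs_add_le _ _).trans ?_
            rw [abs_mul, abs_mul, abs_of_nonneg ha, abs_of_nonneg hc]
        _ ≤ a * l1' + c * l2 := by gcongr
  · intro i hi
    obtain ⟨hx1, hr1⟩ := hm1 i hi
    obtain ⟨hx2, hr2⟩ := hm2 i hi
    constructor
    · have : (a • x1 + c • x2) i = a * x1 i + c * x2 i := by simp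
      rw [this]; nlinarith
    · rw [resid_combo, hr1, hr2]; ring

/-- the canonical primal witness for a face -/
noncomputable def xhat (A : Matrix (Fin m) (Fin n) ℝ) (F : Set (Fin m → ℝ)) : Fin n → ℝ :=
  fun i => if i ∈ Aplus A F then 1 else if i ∈ Aminus A F then -1 else 0

lemma xhat_plus (hi : i ∈ Aplus A F) (hne : F.Nonempty) : xhat A F i = 1 := by
  rw [xhat, if_pos hi]

lemma xhat_minus (hne : F.Nonempty) (hi : i ∈ Aminus A F) : xhat A F i = -1 := by
  rw [xhat, if_neg (fun hp => aplus_aminus_disj hne hp hi), if_pos hi]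

lemma xhat_zero (hF : IsFaceOf (Ydual A) F) (hne : F.Nonempty) (hi : i ∈ Azero A F) :
    xhat A F i = 0 := by
  rw [xhat, if_neg (fun hp => aplus_azero_disj hp hi),
    if_neg (fun hm => aminus_azero_disj hm hi)]

lemma resid_pf (yh : Fin m → ℝ) (i : Fin n) (x : Fin n → ℝ) :
    resid A (A.mulVec x + yh) x i = colDot A i yh := by
  rw [resid]
  congr 1
  abel

/-- the canonical witness point lies in `SFace A F` -/
lemma pf_mem_sface (hF : IsFaceOf (Ydual A) F) (hne : F.Nonempty)
    {yh : Fin m → ℝ} (hyF : yh ∈ F) (hy0 : ∀ i ∈ Azero A F, |colDot A i yh| < 1) :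
    ((1 : ℝ), A.mulVec (xhat A F) + yh, xhat A F) ∈ SFace A F := by
  simp only [SFace, Set.mem_setOf_eq]
  refine ⟨zero_le_one, ?_, ?_, ?_⟩
  · intro i hi
    rw [resid_pf, xhat_plus hi hne]
    exact ⟨zero_le_one, hi yh hyF⟩
  · intro i hi
    rw [resid_pf, xhat_zero hF hne hi]
    exact ⟨rfl, le_of_lt (hy0 i hi)⟩
  · intro i hi
    rw [resid_pf, xhat_minus hne hi]
    exact ⟨by norm_num, hi yh hyF⟩

/-- `S_F ⊆ gph S` -/
lemma sface_subset_gph (hrank : A.rank = m) (hF : IsFaceOf (Ydual A) F) (hne : F.Nonempty) :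
    SFace A F ⊆ gphS A := by
  obtain ⟨yh, hyF, hy0⟩ := exists_yhat hF hne
  rintro ⟨lam, b, x⟩ ⟨hl0, hp, h0, hm⟩
  simp only [SFace, Set.mem_setOf_eq] at hl0 hp h0 hm ⊢
  refine ⟨hl0, ?_⟩
  have habs : ∀ i, |resid A b x i| ≤ lam := by
    intro i
    rcases tri_mem hF hne i with hi | hi | hi
    · rw [(hp i hi).2, abs_of_nonneg hl0]
    · exact (h0 i hi).2
    · rw [(hm i hi).2, abs_neg, abs_of_nonneg hl0]
  have hsgn : ∀ i, resid A b x i * x i = lam * |x i| := by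
    intro i
    rcases tri_mem hF hne i with hi | hi | hi
    · rw [(hp i hi).2, abs_of_nonneg (hp i hi).1]
    · rw [(h0 i hi).1]; simp
    · rw [(hm i hi).2, abs_of_nonpos (hm i hi).1]; ring
  rcases eq_or_lt_of_le hl0 with heq | hpos
  · -- lam = 0
    rw [Sol, if_pos heq.symm]
    have hr0 : ∀ i, resid A b x i = 0 := by
      intro i
      have := habs i
      rw [← heq] at this
      exact abs_eq_zero.mp (le_antisymm this (abs_nonneg _))
    have hAxb : A.mulVec x = b := by
      have hu : b - A.mulVec x = 0 := colDot_transpose_inj hrank (fun i => hr0 i)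
      have := sub_eq_zero.mp hu
      exact this.symm
    refine ⟨hAxb, fun z hz => ?_⟩
    have hsg : ∀ i, colDot A i yh * x i = |x i| := by
      intro i
      rcases tri_mem hF hne i with hi | hi | hi
      · rw [hi yh hyF, abs_of_nonneg (hp i hi).1, one_mul]
      · rw [(h0 i hi).1]; simp
      · rw [hi yh hyF, abs_of_nonpos (hm i hi).1]; ring
    calc l1 x = ∑ i, colDot A i yh * x i := by
          unfold l1
          exact (Finset.sum_congr rfl fun i _ => hsg i).symm
      _ = ∑ k, yh k * A.mulVec x k := (dot_mulVec A yh x).symm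
      _ = ∑ k, yh k * A.mulVec z k := by rw [hAxb, hz]
      _ = ∑ i, colDot A i yh * z i := dot_mulVec A yh z
      _ ≤ l1 z := by
          unfold l1
          refine Finset.sum_le_sum fun i _ => ?_
          calc colDot A i yh * z i ≤ |colDot A i yh * z i| := le_abs_self _
            _ = |colDot A i yh| * |z i| := abs_mul _ _
            _ ≤ 1 * |z i| := mul_le_mul_of_nonneg_right (hF.subset hyF i) (abs_nonneg _)
            _ = |z i| := one_mul _
  · exact kkt_suff hpos habs hsgn

end Proof5

section Proof6
open Classical Finset Matrix
variable {m n : ℕ} {A : Matrix (Fin m) (Fin n) ℝ} {F F' : Set (Fin m → ℝ)}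

lemma dot_sub (v y z : Fin m → ℝ) :
    ∑ k, v k * (y - z) k = ∑ k, v k * y k - ∑ k, v k * z k := by
  simp [mul_sub, Finset.sum_sub_distrib]

/-- a nonempty exposed face of `Y⁰` is determined by its active sign sets -/
lemma face_eq_signs (hF : IsFaceOf (Ydual A) F) (hne : F.Nonempty) :
    F = {y | y ∈ Ydual A ∧ (∀ i ∈ Aplus A F, colDot A i y = 1) ∧
          (∀ i ∈ Aminus A F, colDot A i y = -1)} := by
  obtain ⟨yh, hyF, hy0⟩ := exists_yhat hF hne
  obtain ⟨v, hFv⟩ := hF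
  ext y'
  constructor
  · intro hy'
    exact ⟨(hFv ▸ hy' : _).1, fun i hi => hi y' hy', fun i hi => hi y' hy'⟩
  · rintro ⟨hyd, hp', hm'⟩
    -- choose ε
    set t : Finset (Fin n) := Finset.univ.filter (fun i => i ∈ Azero A F) with ht
    set ε : ℝ := if hts : t.Nonempty then t.inf' hts (fun i => (1 - |colDot A i yh|)/2) else 1
      with hε
    have hεpos : 0 < ε := by
      rw [hε]
      split
      · rename_i hts
        rw [Finset.lt_inf'_iff]
        intro i hi
        have hi0 : i ∈ Azero A F := by
          have := Finset.mem_filter.mp hi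
          exact this.2
        have := hy0 i hi0
        linarith
      · norm_num
    have hεle : ∀ i ∈ Azero A F, ε ≤ (1 - |colDot A i yh|)/2 := by
      intro i hi
      rw [hε]
      have hmem : i ∈ t := Finset.mem_filter.mpr ⟨Finset.mem_univ i, hi⟩
      rw [dif_pos ⟨i, hmem⟩]
      exact Finset.inf'_le _ hmem
    set z : Fin m → ℝ := yh + ε • (yh - y') with hzdef
    have hcz : ∀ i, colDot A i z = colDot A i yh + ε * (colDot A i yh - colDot A i y') := by
      intro i
      rw [hzdef, colDot_add, colDot_smul, colDot_sub]
    have hyhmem := hFv ▸ hyF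
    have hyhY : yh ∈ Ydual A := hyhmem.1
    have hmax : ∀ w ∈ Ydual A, ∑ k, v k * w k ≤ ∑ k, v k * yh k := hyhmem.2
    have hzY : z ∈ Ydual A := by
      intro i
      rw [hcz]
      rcases tri_mem ⟨v, hFv⟩ hne i with hi | hi | hi
      · rw [hi yh hyF, hp' i hi]; norm_num
      · have h1 := hy0 i hi
        have h2 := hεle i hi
        have h3 := hyd i
        have h4 : |colDot A i yh + ε * (colDot A i yh - colDot A i y')|
            ≤ |colDot A i yh| + ε * (|colDot A i yh| + |colDot A i y'|) := by
          refine (abs_add_le _ _).trans ?_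
          gcongr
          rw [abs_mul, abs_of_pos hεpos]
          gcongr
          exact (abs_sub _ _).trans (by rfl)
        have h5 : |colDot A i yh| + ε * (|colDot A i yh| + |colDot A i y'|)
            ≤ |colDot A i yh| + 2 * ε := by
          nlinarith [abs_nonneg (colDot A i yh), abs_nonneg (colDot A i y'), hεpos]
        linarith
      · rw [hi yh hyF, hm' i hi]; norm_num
    have hvz := hmax z hzY
    have hvzeq : ∑ k, v k * z k = ∑ k, v k * yh k
        + ε * (∑ k, v k * yh k - ∑ k, v k * y' k) := by
      have : z = (1:ℝ) • yh + ε • (yh - y') := by rw [hzdef]; simp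
      rw [this, dot_combo, dot_sub]
      ring
    have hyle : ∑ k, v k * yh k ≤ ∑ k, v k * y' k := by
      rw [hvzeq] at hvz
      nlinarith
    have hyeq : ∑ k, v k * y' k = ∑ k, v k * yh k :=
      le_antisymm (hmax y' hyd) hyle
    rw [hFv]
    exact ⟨hyd, fun w hw => hyeq ▸ hmax w hw⟩

lemma face_ext (hF : IsFaceOf (Ydual A) F) (hne : F.Nonempty)
    (hF' : IsFaceOf (Ydual A) F') (hne' : F'.Nonempty)
    (hp : Aplus A F = Aplus A F') (hm : Aminus A F = Aminus A F') : F = F' := by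
  rw [face_eq_signs hF hne, face_eq_signs hF' hne', hp, hm]

end Proof6

section Proof7
open Classical Finset Matrix
variable {m n : ℕ} {A : Matrix (Fin m) (Fin n) ℝ} {F F' : Set (Fin m → ℝ)}

lemma seg_sub_plusminus
    (hF : IsFaceOf (Ydual A) F) (hne : F.Nonempty)
    (hF' : IsFaceOf (Ydual A) F') (hne' : F'.Nonempty)
    {yh yh' : Fin m → ℝ} (hyF : yh ∈ F)
    (hyF' : yh' ∈ F') (hy0' : ∀ i ∈ Azero A F', |colDot A i yh'| < 1)
    (hseg : ∀ t : ℝ, 0 ≤ t → t ≤ 1 →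
      ((1:ℝ), (1-t) • (A.mulVec (xhat A F) + yh) + t • (A.mulVec (xhat A F') + yh'),
        (1-t) • xhat A F + t • xhat A F') ∈ gphS A) :
    Aplus A F ⊆ Aplus A F' ∧ Aminus A F ⊆ Aminus A F' := by
  have hres : ∀ (t : ℝ) (i : Fin n),
      resid A ((1-t) • (A.mulVec (xhat A F) + yh) + t • (A.mulVec (xhat A F') + yh'))
        ((1-t) • xhat A F + t • xhat A F') i
        = (1-t) * colDot A i yh + t * colDot A i yh' := by
    intro t i
    rw [resid_combo, resid_pf, resid_pf]
  have hxt : ∀ (t : ℝ) (i : Fin n), ((1-t) • xhat A F + t • xhat A F') i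
      = (1-t) * xhat A F i + t * xhat A F' i := by
    intro t i; simp
  constructor
  · intro i hi
    have hc : colDot A i yh = 1 := hi yh hyF
    rcases tri_mem hF' hne' i with hi' | hi' | hi'
    · exact hi'
    · exfalso
      have hx' : xhat A F' i = 0 := xhat_zero hF' hne' hi'
      have hsol := (hseg (1/2) (by norm_num) (by norm_num)).2
      have hxpos : 0 < ((1-(1/2:ℝ)) • xhat A F + (1/2:ℝ) • xhat A F') i := by
        rw [hxt, xhat_plus hi hne, hx']; norm_num
      have hr := (kkt_nec one_pos hsol i).2.1 hxpos
      rw [hres, hc] at hr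
      have := hy0' i hi'
      rw [abs_lt] at this
      linarith
    · exfalso
      have hx' : xhat A F' i = -1 := xhat_minus hne' hi'
      have hc' : colDot A i yh' = -1 := hi' yh' hyF'
      have hsol := (hseg (1/4) (by norm_num) (by norm_num)).2
      have hxpos : 0 < ((1-(1/4:ℝ)) • xhat A F + (1/4:ℝ) • xhat A F') i := by
        rw [hxt, xhat_plus hi hne, hx']; norm_num
      have hr := (kkt_nec one_pos hsol i).2.1 hxpos
      rw [hres, hc, hc'] at hr
      norm_num at hr
  · intro i hi
    have hc : colDot A i yh = -1 := hi yh hyF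
    rcases tri_mem hF' hne' i with hi' | hi' | hi'
    · exfalso
      have hx' : xhat A F' i = 1 := xhat_plus hi' hne'
      have hc' : colDot A i yh' = 1 := hi' yh' hyF'
      have hsol := (hseg (1/4) (by norm_num) (by norm_num)).2
      have hxneg : ((1-(1/4:ℝ)) • xhat A F + (1/4:ℝ) • xhat A F') i < 0 := by
        rw [hxt, xhat_minus hne hi, hx']; norm_num
      have hr := (kkt_nec one_pos hsol i).2.2 hxneg
      rw [hres, hc, hc'] at hr
      norm_num at hr
    · exfalso
      have hx' : xhat A F' i = 0 := xhat_zero hF' hne' hi'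
      have hsol := (hseg (1/2) (by norm_num) (by norm_num)).2
      have hxneg : ((1-(1/2:ℝ)) • xhat A F + (1/2:ℝ) • xhat A F') i < 0 := by
        rw [hxt, xhat_minus hne hi, hx']; norm_num
      have hr := (kkt_nec one_pos hsol i).2.2 hxneg
      rw [hres, hc] at hr
      have := hy0' i hi'
      rw [abs_lt] at this
      linarith
    · exact hi'

lemma smul_tuple_eq (t : ℝ) (b1 b2 : Fin m → ℝ) (x1 x2 : Fin n → ℝ) :
    (1-t) • (((1:ℝ), b1, x1) : ℝ × (Fin m → ℝ) × (Fin n → ℝ)) + t • ((1:ℝ), b2, x2)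
      = ((1:ℝ), (1-t) • b1 + t • b2, (1-t) • x1 + t • x2) := by
  simp [Prod.ext_iff]

/-- if the segment between canonical witnesses stays in the graph, the faces agree -/
lemma face_eq_of_seg
    (hF : IsFaceOf (Ydual A) F) (hne : F.Nonempty)
    (hF' : IsFaceOf (Ydual A) F') (hne' : F'.Nonempty)
    {yh yh' : Fin m → ℝ} (hyF : yh ∈ F) (hy0 : ∀ i ∈ Azero A F, |colDot A i yh| < 1)
    (hyF' : yh' ∈ F') (hy0' : ∀ i ∈ Azero A F', |colDot A i yh'| < 1)
    (hseg : segment ℝ ((1:ℝ), A.mulVec (xhat A F) + yh, xhat A F)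
        ((1:ℝ), A.mulVec (xhat A F') + yh', xhat A F') ⊆ gphS A) :
    F = F' := by
  have hseg1 : ∀ t : ℝ, 0 ≤ t → t ≤ 1 →
      ((1:ℝ), (1-t) • (A.mulVec (xhat A F) + yh) + t • (A.mulVec (xhat A F') + yh'),
        (1-t) • xhat A F + t • xhat A F') ∈ gphS A := by
    intro t ht0 ht1
    rw [← smul_tuple_eq]
    exact hseg ⟨1 - t, t, by linarith, ht0, by ring, rfl⟩
  have hseg2 : ∀ t : ℝ, 0 ≤ t → t ≤ 1 →
      ((1:ℝ), (1-t) • (A.mulVec (xhat A F') + yh') + t • (A.mulVec (xhat A F) + yh),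
        (1-t) • xhat A F' + t • xhat A F) ∈ gphS A := by
    intro t ht0 ht1
    rw [← smul_tuple_eq]
    refine hseg ⟨t, 1 - t, ht0, by linarith, by ring, ?_⟩
    rw [add_comm]
  obtain ⟨h1, h2⟩ := seg_sub_plusminus hF hne hF' hne' hyF hyF' hy0' hseg1
  obtain ⟨h3, h4⟩ := seg_sub_plusminus hF' hne' hF hne hyF' hyF hy0 hseg2
  exact face_ext hF hne hF' hne' (le_antisymm h1 h3) (le_antisymm h2 h4)

end Proof7

section Proof8
open Classical Finset Matrix
variable {m n : ℕ} {A : Matrix (Fin m) (Fin n) ℝ} {F : Set (Fin m → ℝ)}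

lemma smul_tuple_eq' (s t l1 l2 : ℝ) (b1 b2 : Fin m → ℝ) (x1 x2 : Fin n → ℝ) :
    s • ((l1, b1, x1) : ℝ × (Fin m → ℝ) × (Fin n → ℝ)) + t • (l2, b2, x2)
      = (s*l1 + t*l2, s • b1 + t • b2, s • x1 + t • x2) := by
  simp [Prod.ext_iff]

lemma affine_eq_pts {a b a' b' t1 t2 : ℝ} (hne : t1 ≠ t2)
    (h1 : (1-t1)*a + t1*b = (1-t1)*a' + t1*b')
    (h2 : (1-t2)*a + t2*b = (1-t2)*a' + t2*b') : a = a' ∧ b = b' := by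
  have hd : (t1 - t2) * ((b - a) - (b' - a')) = 0 := by linear_combination h1 - h2
  have hne' : t1 - t2 ≠ 0 := sub_ne_zero.mpr hne
  have hd2 : (b - a) - (b' - a') = 0 := by
    rcases mul_eq_zero.mp hd with h | h
    · exact absurd h hne'
    · exact h
  have ha : a = a' := by linear_combination h1 - t1 * hd2
  have hb : b = b' := by linear_combination hd2 + ha
  exact ⟨ha, hb⟩

lemma abs_le_of_seg {c r lam : ℝ} (hlam : 0 ≤ lam)
    (h : ∀ t : ℝ, 0 ≤ t → t < 1 → |(1-t)*c + t*r| ≤ (1-t)*1 + t*lam) : |r| ≤ lam := by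
  apply le_of_eps
  intro ε hε
  set K : ℝ := 1 + |r| + |c| with hK
  have hKpos : 0 < K := by positivity
  set δ : ℝ := min (ε / K) (1/2) with hδ
  have hδpos : 0 < δ := lt_min (by positivity) (by norm_num)
  have hδle : δ ≤ 1/2 := min_le_right _ _
  have hδK : δ * K ≤ ε := by
    have h1 : δ ≤ ε / K := min_le_left _ _
    calc δ * K ≤ (ε / K) * K := by nlinarith
      _ = ε := by field_simp
  have ht := h (1 - δ) (by linarith) (by linarith)
  have hsimp : (1 - (1-δ)) = δ := by ring
  have h2 : |δ * c + (1-δ) * r| ≤ δ * 1 + (1-δ) * lam := by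
    have := ht
    rw [hsimp] at this
    convert this using 2 <;> ring
  have h3 : |r| ≤ |δ * c + (1-δ) * r| + δ * (|r| + |c|) := by
    have : r = (δ * c + (1-δ) * r) + δ * (r - c) := by ring
    calc |r| = |(δ * c + (1-δ) * r) + δ * (r - c)| := by rw [← this]
      _ ≤ |δ * c + (1-δ) * r| + |δ * (r - c)| := abs_add_le _ _
      _ ≤ |δ * c + (1-δ) * r| + δ * (|r| + |c|) := by
          gcongr
          rw [abs_mul, abs_of_pos hδpos]
          gcongr
          exact (abs_sub _ _).trans (by rfl)
  have h4 : (1-δ) * lam ≤ lam := by nlinarith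
  calc |r| ≤ δ * 1 + (1-δ) * lam + δ * (|r| + |c|) := by linarith
    _ ≤ lam + δ * K := by rw [hK]; nlinarith
    _ ≤ lam + ε := by linarith

set_option maxHeartbeats 1600000 in
/-- a convex subset of the graph containing the canonical witness is inside `S_F` -/
lemma convex_sub_sface (hF : IsFaceOf (Ydual A) F) (hne : F.Nonempty)
    {yh : Fin m → ℝ} (hyF : yh ∈ F) (hy0 : ∀ i ∈ Azero A F, |colDot A i yh| < 1)
    {Cs : Set (ℝ × (Fin m → ℝ) × (Fin n → ℝ))} (hconv : Convex ℝ Cs) (hsub : Cs ⊆ gphS A)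
    (hpF : ((1:ℝ), A.mulVec (xhat A F) + yh, xhat A F) ∈ Cs)
    {p : ℝ × (Fin m → ℝ) × (Fin n → ℝ)} (hp : p ∈ Cs) : p ∈ SFace A F := by
  obtain ⟨lam, b, x⟩ := p
  simp only [SFace, Set.mem_setOf_eq]
  have hlam0 : (0:ℝ) ≤ lam := (hsub hp).1
  have key : ∀ (i : Fin n) (t : ℝ), 0 ≤ t → t < 1 →
      |(1-t) * colDot A i yh + t * resid A b x i| ≤ (1-t) * 1 + t * lam ∧
      (0 < (1-t) * xhat A F i + t * x i →
        (1-t) * colDot A i yh + t * resid A b x i = (1-t) * 1 + t * lam) ∧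
      ((1-t) * xhat A F i + t * x i < 0 →
        (1-t) * colDot A i yh + t * resid A b x i = -((1-t) * 1 + t * lam)) := by
    intro i t ht0 ht1
    have hlpos : 0 < (1-t) * 1 + t * lam := by nlinarith [mul_nonneg ht0 hlam0]
    have hmemt := hconv hpF hp (by linarith : (0:ℝ) ≤ 1 - t) ht0 (by ring)
    rw [smul_tuple_eq'] at hmemt
    have hsolt := (hsub hmemt).2
    have hnec := kkt_nec hlpos hsolt i
    rw [resid_combo, resid_pf] at hnec
    simp only [Pi.add_apply, Pi.smul_apply, smul_eq_mul] at hnec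
    exact hnec
  refine ⟨hlam0, ?_, ?_, ?_⟩
  · -- Aplus
    intro i hi
    have hc : colDot A i yh = 1 := hi yh hyF
    have hxh : xhat A F i = 1 := xhat_plus hi hne
    have hxpos : 0 ≤ x i := by
      by_contra hcon
      push_neg at hcon
      set u : ℝ := 1 - x i with hu
      have hu1 : 1 < u := by rw [hu]; linarith
      have hu0 : 0 < u := by linarith
      have ht1a : (0:ℝ) ≤ 1/(2*u) := by positivity
      have ht1b : 1/(2*u) < 1 := by rw [div_lt_one (by linarith)]; linarith
      have ht2a : (0:ℝ) ≤ 1/(3*u) := by positivity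
      have ht2b : 1/(3*u) < 1 := by rw [div_lt_one (by linarith)]; linarith
      have hm1 : 1/(2*u) * u = 1/2 := by field_simp
      have hm2 : 1/(3*u) * u = 1/3 := by field_simp
      have e1 := (key i (1/(2*u)) ht1a ht1b).2.1
        (by rw [hxh]; nlinarith)
      have e2 := (key i (1/(3*u)) ht2a ht2b).2.1
        (by rw [hxh]; nlinarith)
      rw [hc] at e1 e2
      have hne12 : 1/(2*u) ≠ 1/(3*u) := by
        intro hcontra
        field_simp at hcontra
        linarith
      have hr1 : resid A b x i = lam := (affine_eq_pts hne12 e1 e2).2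
      -- now take t3 beyond ts
      set t3 : ℝ := (1/u + 1)/2 with ht3
      have ht30 : 0 < t3 := by positivity
      have ht31 : t3 < 1 := by
        rw [ht3]
        have : 1/u < 1 := by rw [div_lt_one hu0]; linarith
        linarith
      have hm3 : t3 * u = (1 + u)/2 := by rw [ht3]; field_simp
      have hxiu : x i = 1 - u := by rw [hu]; ring
      have e3 := (key i t3 ht30.le ht31).2.2 (by
        rw [hxh, hxiu]
        have h5 : (1-t3) * 1 + t3 * (1-u) = 1 - t3*u := by ring
        rw [h5, hm3]
        linarith)
      rw [hc, hr1] at e3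
      have hl3 : 0 < (1-t3) * 1 + t3 * lam := by nlinarith [mul_nonneg ht30.le hlam0]
      linarith [e3]
    have heq : resid A b x i = lam := by
      have e1 := (key i (1/2) (by norm_num) (by norm_num)).2.1
        (by rw [hxh]; nlinarith)
      have e2 := (key i (1/3) (by norm_num) (by norm_num)).2.1
        (by rw [hxh]; nlinarith)
      rw [hc] at e1 e2
      exact (affine_eq_pts (by norm_num : (1/2:ℝ) ≠ 1/3) e1 e2).2
    exact ⟨hxpos, heq⟩
  · -- Azero
    intro i hi
    have hc : |colDot A i yh| < 1 := hy0 i hi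
    have hxh : xhat A F i = 0 := xhat_zero hF hne hi
    have hx0 : x i = 0 := by
      rcases lt_trichotomy (x i) 0 with hx | hx | hx
      · exfalso
        have e1 := (key i (1/2) (by norm_num) (by norm_num)).2.2
          (by rw [hxh]; nlinarith)
        have e2 := (key i (1/3) (by norm_num) (by norm_num)).2.2
          (by rw [hxh]; nlinarith)
        have e1' : (1-(1/2:ℝ)) * colDot A i yh + (1/2) * resid A b x i
            = (1-(1/2:ℝ)) * (-1) + (1/2) * (-lam) := by rw [e1]; ring
        have e2' : (1-(1/3:ℝ)) * colDot A i yh + (1/3) * resid A b x i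
            = (1-(1/3:ℝ)) * (-1) + (1/3) * (-lam) := by rw [e2]; ring
        have := (affine_eq_pts (by norm_num : (1/2:ℝ) ≠ 1/3) e1' e2').1
        rw [this] at hc
        norm_num at hc
      · exact hx
      · exfalso
        have e1 := (key i (1/2) (by norm_num) (by norm_num)).2.1
          (by rw [hxh]; nlinarith)
        have e2 := (key i (1/3) (by norm_num) (by norm_num)).2.1
          (by rw [hxh]; nlinarith)
        have := (affine_eq_pts (by norm_num : (1/2:ℝ) ≠ 1/3) e1 e2).1
        rw [this] at hc
        norm_num at hc
    refine ⟨hx0, ?_⟩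
    exact abs_le_of_seg hlam0 (fun t ht0 ht1 => (key i t ht0 ht1).1)
  · -- Aminus
    intro i hi
    have hc : colDot A i yh = -1 := hi yh hyF
    have hxh : xhat A F i = -1 := xhat_minus hne hi
    have hxneg : x i ≤ 0 := by
      by_contra hcon
      push_neg at hcon
      set u : ℝ := 1 + x i with hu
      have hu1 : 1 < u := by rw [hu]; linarith
      have hu0 : 0 < u := by linarith
      have ht1a : (0:ℝ) ≤ 1/(2*u) := by positivity
      have ht1b : 1/(2*u) < 1 := by rw [div_lt_one (by linarith)]; linarith
      have ht2a : (0:ℝ) ≤ 1/(3*u) := by positivity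
      have ht2b : 1/(3*u) < 1 := by rw [div_lt_one (by linarith)]; linarith
      have hm1 : 1/(2*u) * u = 1/2 := by field_simp
      have hm2 : 1/(3*u) * u = 1/3 := by field_simp
      have e1 := (key i (1/(2*u)) ht1a ht1b).2.2
        (by rw [hxh]; nlinarith)
      have e2 := (key i (1/(3*u)) ht2a ht2b).2.2
        (by rw [hxh]; nlinarith)
      have e1' : (1-(1/(2*u))) * colDot A i yh + (1/(2*u)) * resid A b x i
          = (1-(1/(2*u))) * (-1) + (1/(2*u)) * (-lam) := by rw [e1]; ring
      have e2' : (1-(1/(3*u))) * colDot A i yh + (1/(3*u)) * resid A b x i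
          = (1-(1/(3*u))) * (-1) + (1/(3*u)) * (-lam) := by rw [e2]; ring
      have hne12 : 1/(2*u) ≠ 1/(3*u) := by
        intro hcontra
        field_simp at hcontra
        linarith
      have hr1 : resid A b x i = -lam := (affine_eq_pts hne12 e1' e2').2
      set t3 : ℝ := (1/u + 1)/2 with ht3
      have ht30 : 0 < t3 := by positivity
      have ht31 : t3 < 1 := by
        rw [ht3]
        have : 1/u < 1 := by rw [div_lt_one hu0]; linarith
        linarith
      have hm3 : t3 * u = (1 + u)/2 := by rw [ht3]; field_simp
      have hxiu : x i = u - 1 := by rw [hu]; ring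
      have e3 := (key i t3 ht30.le ht31).2.1 (by
        rw [hxh, hxiu]
        have h5 : (1-t3) * (-1) + t3 * (u-1) = t3*u - 1 := by ring
        rw [h5, hm3]
        linarith)
      rw [hc, hr1] at e3
      have hl3 : 0 < (1-t3) * 1 + t3 * lam := by nlinarith [mul_nonneg ht30.le hlam0]
      linarith [e3]
    have heq : resid A b x i = -lam := by
      have e1 := (key i (1/2) (by norm_num) (by norm_num)).2.2
        (by rw [hxh]; nlinarith)
      have e2 := (key i (1/3) (by norm_num) (by norm_num)).2.2
        (by rw [hxh]; nlinarith)
      have e1' : (1-(1/2:ℝ)) * colDot A i yh + (1/2) * resid A b x i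
          = (1-(1/2:ℝ)) * (-1) + (1/2) * (-lam) := by rw [e1]; ring
      have e2' : (1-(1/3:ℝ)) * colDot A i yh + (1/3) * resid A b x i
          = (1-(1/3:ℝ)) * (-1) + (1/3) * (-lam) := by rw [e2]; ring
      exact (affine_eq_pts (by norm_num : (1/2:ℝ) ≠ 1/3) e1' e2').2
    exact ⟨hxneg, heq⟩

end Proof8

section Proof9
open Classical Finset Matrix
variable {m n : ℕ} {A : Matrix (Fin m) (Fin n) ℝ} {F F' : Set (Fin m → ℝ)}

/-- a strictly-signed point of `S_F` cannot lie in `S_{F'}` unless `F = F'` -/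
lemma face_eq_of_good (hF : IsFaceOf (Ydual A) F) (hne : F.Nonempty)
    (hF' : IsFaceOf (Ydual A) F') (hne' : F'.Nonempty)
    {lam : ℝ} {b : Fin m → ℝ} {x : Fin n → ℝ} (hS' : (lam, b, x) ∈ SFace A F')
    (hl : 0 < lam)
    (hplus : ∀ i ∈ Aplus A F, 0 < x i)
    (hminus : ∀ i ∈ Aminus A F, x i < 0)
    (hzero : ∀ i ∈ Azero A F, |resid A b x i| < lam) : F = F' := by
  obtain ⟨-, hp', h0', hm'⟩ := hS'
  simp only at hp' h0' hm'
  have sub1 : Aplus A F ⊆ Aplus A F' := by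
    intro i hi
    rcases tri_mem hF' hne' i with h | h | h
    · exact h
    · exact absurd (h0' i h).1 (ne_of_gt (hplus i hi))
    · exact absurd (hm' i h).1 (not_le.mpr (hplus i hi))
  have sub2 : Azero A F ⊆ Azero A F' := by
    intro i hi
    rcases tri_mem hF' hne' i with h | h | h
    · exfalso
      have := hzero i hi
      rw [(hp' i h).2, abs_of_pos hl] at this
      exact lt_irrefl _ this
    · exact h
    · exfalso
      have := hzero i hi
      rw [(hm' i h).2, abs_neg, abs_of_pos hl] at this
      exact lt_irrefl _ this
  have sub3 : Aminus A F ⊆ Aminus A F' := by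
    intro i hi
    rcases tri_mem hF' hne' i with h | h | h
    · exact absurd (hp' i h).1 (not_le.mpr (hminus i hi))
    · exact absurd (h0' i h).1 (ne_of_lt (hminus i hi))
    · exact h
  have eq1 : Aplus A F = Aplus A F' := by
    refine Set.Subset.antisymm sub1 fun i hi => ?_
    rcases tri_mem hF hne i with h | h | h
    · exact h
    · exact absurd (sub2 h) (fun hc => aplus_azero_disj hi hc)
    · exact absurd (sub3 h) (fun hc => aplus_aminus_disj hne' hi hc)
  have eq2 : Aminus A F = Aminus A F' := by
    refine Set.Subset.antisymm sub3 fun i hi => ?_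
    rcases tri_mem hF hne i with h | h | h
    · exact absurd (sub1 h) (fun hc => aplus_aminus_disj hne' hc hi)
    · exact absurd (sub2 h) (fun hc => aminus_azero_disj hi hc)
    · exact h
  exact face_ext hF hne hF' hne' eq1 eq2

end Proof9

theorem stmt19 {m n : ℕ} (A : Matrix (Fin m) (Fin n) ℝ) (hrank : A.rank = m)
    (L : ℕ) (C : Fin L → Set (ℝ × (Fin m → ℝ) × (Fin n → ℝ)))
    (hclosed : ∀ l, IsClosed (C l)) (hconv : ∀ l, Convex ℝ (C l))
    (hunion : gphS A = ⋃ l, C l) :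
    ({F : Set (Fin m → ℝ) | IsFaceOf (Ydual A) F ∧ F.Nonempty}).ncard ≤ L ∧
    (L = ({F : Set (Fin m → ℝ) | IsFaceOf (Ydual A) F ∧ F.Nonempty}).ncard →
      Set.range C = SFace A '' {F | IsFaceOf (Ydual A) F ∧ F.Nonempty}) := by
  classical
  set ℱs : Set (Set (Fin m → ℝ)) := {F | IsFaceOf (Ydual A) F ∧ F.Nonempty} with hFs
  have hdata : ∀ F : Set (Fin m → ℝ), ∃ y : Fin m → ℝ,
      (IsFaceOf (Ydual A) F ∧ F.Nonempty) → y ∈ F ∧ ∀ i ∈ Azero A F, |colDot A i y| < 1 := by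
    intro F
    by_cases h : IsFaceOf (Ydual A) F ∧ F.Nonempty
    · obtain ⟨y, h1, h2⟩ := exists_yhat h.1 h.2
      exact ⟨y, fun _ => ⟨h1, h2⟩⟩
    · exact ⟨0, fun hc => absurd hc h⟩
  choose yh hyh using hdata
  set P : Set (Fin m → ℝ) → ℝ × (Fin m → ℝ) × (Fin n → ℝ) :=
    fun F => ((1:ℝ), A.mulVec (xhat A F) + yh F, xhat A F) with hP
  have hPS : ∀ F ∈ ℱs, P F ∈ SFace A F := fun F hF =>
    pf_mem_sface hF.1 hF.2 (hyh F hF).1 (hyh F hF).2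
  have hSsub : ∀ F ∈ ℱs, SFace A F ⊆ gphS A := fun F hF => sface_subset_gph hrank hF.1 hF.2
  have hPC : ∀ F ∈ ℱs, ∃ l, P F ∈ C l := by
    intro F hF
    have h := hSsub F hF (hPS F hF)
    rw [hunion] at h
    exact Set.mem_iUnion.mp h
  choose φ hφ using hPC
  have hinj : ∀ F hF F' hF', φ F hF = φ F' hF' → F = F' := by
    intro F hF F' hF' heq
    refine face_eq_of_seg hF.1 hF.2 hF'.1 hF'.2 (hyh F hF).1 (hyh F hF).2
      (hyh F' hF').1 (hyh F' hF').2 ?_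
    intro q hq
    have h1 : P F ∈ C (φ F hF) := hφ F hF
    have h2 : P F' ∈ C (φ F hF) := by rw [heq]; exact hφ F' hF'
    have h3 := (hconv (φ F hF)).segment_subset h1 h2 hq
    rw [hunion]
    exact Set.mem_iUnion.mpr ⟨_, h3⟩
  set ψ : ℱs → Fin L := fun F => φ F.1 F.2 with hψ
  have hψinj : Function.Injective ψ := by
    rintro ⟨F, hF⟩ ⟨F', hF'⟩ h
    exact Subtype.ext (hinj F hF F' hF' h)
  have hcard : ℱs.ncard ≤ L := by
    have h := Nat.card_le_card_of_injective ψ hψinj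
    rwa [Nat.card_coe_set_eq, Nat.card_eq_fintype_card, Fintype.card_fin] at h
  refine ⟨hcard, ?_⟩
  intro hL
  have hψbij : Function.Bijective ψ := by
    rw [Nat.bijective_iff_injective_and_card]
    refine ⟨hψinj, ?_⟩
    rw [Nat.card_coe_set_eq, Nat.card_eq_fintype_card, Fintype.card_fin, hL]
  have hCsub : ∀ (F) (hF : F ∈ ℱs), C (φ F hF) ⊆ SFace A F := by
    intro F hF p hp
    refine convex_sub_sface hF.1 hF.2 (hyh F hF).1 (hyh F hF).2 (hconv _) ?_ (hφ F hF) hp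
    rw [hunion]
    exact Set.subset_iUnion C _
  have hCeq : ∀ (F) (hF : F ∈ ℱs), C (φ F hF) = SFace A F := by
    intro F hF
    refine Set.Subset.antisymm (hCsub F hF) ?_
    rintro ⟨lam, b, x⟩ hpS
    have hpS' := hpS
    simp only [SFace, Set.mem_setOf_eq] at hpS'
    obtain ⟨hl0, hpl, hze, hmi⟩ := hpS'
    set Q : ℕ → ℝ × (Fin m → ℝ) × (Fin n → ℝ) :=
      fun k => (1 - 1/((k:ℝ)+1)) • ((lam, b, x) : ℝ × (Fin m → ℝ) × (Fin n → ℝ))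
        + (1/((k:ℝ)+1)) • P F with hQ
    have hkey : ∀ k : ℕ, Q k ∈ C (φ F hF) := by
      intro k
      set s : ℝ := 1/((k:ℝ)+1) with hs
      have hs0 : 0 < s := by positivity
      have hs1 : s ≤ 1 := by
        rw [hs, div_le_one (by positivity)]
        linarith [Nat.cast_nonneg (α := ℝ) k]
      have hqS : Q k ∈ SFace A F :=
        sface_convex hpS (hPS F hF) (by linarith) hs0.le (by ring)
      have hqtup : Q k = ((1-s)*lam + s*1,
          (1-s) • b + s • (A.mulVec (xhat A F) + yh F), (1-s) • x + s • xhat A F) := by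
        show (1 - s) • ((lam, b, x) : ℝ × (Fin m → ℝ) × (Fin n → ℝ))
          + s • (((1:ℝ), A.mulVec (xhat A F) + yh F, xhat A F) :
            ℝ × (Fin m → ℝ) × (Fin n → ℝ)) = _
        exact smul_tuple_eq' _ _ _ _ _ _ _ _
      have hqg := hSsub F hF hqS
      rw [hunion] at hqg
      obtain ⟨l', hql'⟩ := Set.mem_iUnion.mp hqg
      obtain ⟨⟨F', hF'⟩, hφF'⟩ := hψbij.2 l'
      have hqS' : Q k ∈ SFace A F' := by
        refine hCsub F' hF' ?_
        rw [hψ] at hφF'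
        simp only at hφF'
        rw [hφF']
        exact hql'
      rw [hqtup] at hqS'
      -- good properties
      have hgl : 0 < (1-s)*lam + s*1 := by nlinarith
      have hgplus : ∀ i ∈ Aplus A F, 0 < ((1-s) • x + s • xhat A F) i := by
        intro i hi
        have h1 := (hpl i hi).1
        have h2 : xhat A F i = 1 := xhat_plus hi hF.2
        simp only [Pi.add_apply, Pi.smul_apply, smul_eq_mul]
        rw [h2]
        nlinarith
      have hgminus : ∀ i ∈ Aminus A F, ((1-s) • x + s • xhat A F) i < 0 := by
        intro i hi
        have h1 := (hmi i hi).1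
        have h2 : xhat A F i = -1 := xhat_minus hF.2 hi
        simp only [Pi.add_apply, Pi.smul_apply, smul_eq_mul]
        rw [h2]
        nlinarith
      have hgzero : ∀ i ∈ Azero A F,
          |resid A ((1-s) • b + s • (A.mulVec (xhat A F) + yh F))
            ((1-s) • x + s • xhat A F) i| < (1-s)*lam + s*1 := by
        intro i hi
        rw [resid_combo, resid_pf]
        have h1 := (hze i hi).2
        have h2 := (hyh F hF).2 i hi
        calc |(1-s) * resid A b x i + s * colDot A i (yh F)|
            ≤ (1-s) * |resid A b x i| + s * |colDot A i (yh F)| := by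
              refine (abs_add_le _ _).trans ?_
              rw [abs_mul, abs_mul, abs_of_nonneg (by linarith : (0:ℝ) ≤ 1-s),
                abs_of_pos hs0]
          _ < (1-s)*lam + s*1 := by
              have h3 : (1-s) * |resid A b x i| ≤ (1-s) * lam := by nlinarith
              nlinarith
      have hFF' : F = F' :=
        face_eq_of_good hF.1 hF.2 hF'.1 hF'.2 hqS' hgl hgplus hgminus hgzero
      subst hFF'
      rw [hψ] at hφF'
      simp only at hφF'
      rw [← hφF'] at hql'
      exact hql'
    -- limit
    have hfun : ∀ k : ℕ, Q k = ((lam, b, x) : ℝ × (Fin m → ℝ) × (Fin n → ℝ))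
        + (1/((k:ℝ)+1)) • (P F - (lam, b, x)) := by
      intro k
      rw [hQ]
      simp only [sub_smul, one_smul, smul_sub]
      abel
    have hten : Filter.Tendsto Q Filter.atTop (nhds ((lam, b, x) :
        ℝ × (Fin m → ℝ) × (Fin n → ℝ))) := by
      have h1 : Filter.Tendsto (fun k : ℕ => 1/((k:ℝ)+1)) Filter.atTop (nhds 0) :=
        tendsto_one_div_add_atTop_nhds_zero_nat
      have h2 := Filter.Tendsto.smul_const h1 (P F - (lam, b, x))
      have h3 := Filter.Tendsto.add
        (tendsto_const_nhds (x := ((lam, b, x) : ℝ × (Fin m → ℝ) × (Fin n → ℝ)))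
          (f := Filter.atTop (α := ℕ))) h2
      rw [zero_smul, add_zero] at h3
      convert h3 using 1
      funext k
      exact hfun k
    exact (hclosed _).mem_of_tendsto hten (Filter.Eventually.of_forall hkey)
  apply Set.Subset.antisymm
  · rintro s ⟨l, rfl⟩
    obtain ⟨⟨F, hF⟩, hφF⟩ := hψbij.2 l
    refine ⟨F, hF, ?_⟩
    rw [← hCeq F hF]
    rw [hψ] at hφF
    simp only at hφF
    rw [hφF]
  · rintro s ⟨F, hF, rfl⟩
    exact ⟨φ F hF, hCeq F hF⟩
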